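/- (Bound (4.17) on u_z via Poincaré in the z direction.) Assume u = 0 on ∂E, the uniform bounds 0 < a ≤ A_θ, A_z ≤ A and |∇A_θ| + |∇A_z| ≤ B, that κ_θ, κ_z ≥ 0, and that κ_z ≤ c√K_G on E where K_G = κ_θ κ_z, for some c > 0. Let L = sup_θ (z₂(θ) − z₁(θ)). Then there exists a constant C > 0, depending only on a, A, B, c, such that ‖u_z‖²_{L²(E)} ≤ C L² ( ‖|F^sym|‖²_{L²(E)} + ‖√K_G u_t‖²_{L²(E)} + ‖u_θ‖²_{L²(E)} ). -/

import Mathlib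

open MeasureTheory Set Real

noncomputable section

/-- Partial derivative in `θ` of a scalar function on the parameter plane `(θ, z)`. -/
def dTh (f : ℝ × ℝ → ℝ) (p : ℝ × ℝ) : ℝ := fderiv ℝ f p (1, 0)

/-- Partial derivative in `z` of a scalar function on the parameter plane `(θ, z)`. -/
def dZ (f : ℝ × ℝ → ℝ) (p : ℝ × ℝ) : ℝ := fderiv ℝ f p (0, 1)

/-- The two-dimensional data: the functions `z1, z2` determining the parameter domain `E`,
the metric coefficients `Ath = A_θ`, `Az = A_z`, the principal curvatures `kth = κ_θ`,
`kz = κ_z`, and the components `ut = u_t`, `uth = u_θ`, `uz = u_z` of a displacement. -/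
structure Setup2D where
  z1 : ℝ → ℝ
  z2 : ℝ → ℝ
  Ath : ℝ × ℝ → ℝ
  Az : ℝ × ℝ → ℝ
  kth : ℝ × ℝ → ℝ
  kz : ℝ × ℝ → ℝ
  ut : ℝ × ℝ → ℝ
  uth : ℝ × ℝ → ℝ
  uz : ℝ × ℝ → ℝ

namespace Setup2D

/-- The parameter domain `E = {(θ,z) : θ ∈ (0,1), z ∈ (z1 θ, z2 θ)}`. -/
def E (S : Setup2D) : Set (ℝ × ℝ) :=
  {p | p.1 ∈ Ioo (0 : ℝ) 1 ∧ p.2 ∈ Ioo (S.z1 p.1) (S.z2 p.1)}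

/-- The entry `F₂₂` of the simplified gradient. -/
def F22 (S : Setup2D) (p : ℝ × ℝ) : ℝ :=
  (S.Az p * dTh S.uth p + S.Az p * S.Ath p * S.kth p * S.ut p + dZ S.Ath p * S.uz p) /
    (S.Az p * S.Ath p)

/-- The entry `F₂₃` of the simplified gradient. -/
def F23 (S : Setup2D) (p : ℝ × ℝ) : ℝ :=
  (S.Ath p * dZ S.uth p - dTh S.Az p * S.uz p) / (S.Az p * S.Ath p)

/-- The entry `F₃₂` of the simplified gradient. -/
def F32 (S : Setup2D) (p : ℝ × ℝ) : ℝ :=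
  (S.Az p * dTh S.uz p - dZ S.Ath p * S.uth p) / (S.Az p * S.Ath p)

/-- The entry `F₃₃` of the simplified gradient. -/
def F33 (S : Setup2D) (p : ℝ × ℝ) : ℝ :=
  (S.Ath p * dZ S.uz p + S.Az p * S.Ath p * S.kz p * S.ut p + dTh S.Az p * S.uth p) /
    (S.Az p * S.Ath p)

/-- `F₂₃^sym = (F₂₃ + F₃₂)/2`. -/
def F23sym (S : Setup2D) (p : ℝ × ℝ) : ℝ := (S.F23 p + S.F32 p) / 2

/-- `|F^sym|² = F₂₂² + 2 (F₂₃^sym)² + F₃₃²`. -/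
def FsymSq (S : Setup2D) (p : ℝ × ℝ) : ℝ := S.F22 p ^ 2 + 2 * S.F23sym p ^ 2 + S.F33 p ^ 2

/-- The weighted inner product `(f, g)_E = ∫_E A_θ A_z f g dθ dz`. -/
def ip (S : Setup2D) (f g : ℝ × ℝ → ℝ) : ℝ := ∫ p in S.E, S.Ath p * S.Az p * f p * g p

/-- The weighted squared norm `‖f‖²_E`. -/
def nsq (S : Setup2D) (f : ℝ × ℝ → ℝ) : ℝ := S.ip f f

/-- The weighted squared norm `‖|F^sym|‖²_E` of the simplified symmetrized gradient. -/
def nF (S : Setup2D) : ℝ := ∫ p in S.E, S.Ath p * S.Az p * S.FsymSq p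

/-- The standing context: the form of the domain, the regularity `A_θ, A_z, κ_θ, κ_z ∈ C¹`,
positivity of `A_θ, A_z` on the closure of `E`, and `u ∈ C¹`. -/
def Base (S : Setup2D) : Prop :=
  (∀ θ ∈ Icc (0 : ℝ) 1, 0 ≤ S.z1 θ ∧ S.z1 θ < S.z2 θ ∧ S.z2 θ ≤ 1) ∧
  ContDiff ℝ 1 S.Ath ∧ ContDiff ℝ 1 S.Az ∧ ContDiff ℝ 1 S.kth ∧ ContDiff ℝ 1 S.kz ∧
  (∀ p ∈ closure S.E, 0 < S.Ath p ∧ 0 < S.Az p) ∧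
  ContDiff ℝ 1 S.ut ∧ ContDiff ℝ 1 S.uth ∧ ContDiff ℝ 1 S.uz

/-- The boundary condition `u = 0` on `∂E`. -/
def BZero (S : Setup2D) : Prop := ∀ p ∈ frontier S.E, S.ut p = 0 ∧ S.uth p = 0 ∧ S.uz p = 0

/-- The additional `C²` regularity of `A_θ, A_z` and `u`. -/
def Csq (S : Setup2D) : Prop :=
  ContDiff ℝ 2 S.Ath ∧ ContDiff ℝ 2 S.Az ∧
  ContDiff ℝ 2 S.ut ∧ ContDiff ℝ 2 S.uth ∧ ContDiff ℝ 2 S.uz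

/-- The Codazzi–Gauss identity `∂_z(A_{θ,z}/A_z) + ∂_θ(A_{z,θ}/A_θ) = -A_z A_θ κ_z κ_θ`. -/
def CodazziGauss (S : Setup2D) : Prop :=
  ∀ p ∈ S.E,
    dZ (fun q => dZ S.Ath q / S.Az q) p + dTh (fun q => dTh S.Az q / S.Ath q) p =
      -(S.Az p * S.Ath p * S.kz p * S.kth p)

/-- The uniform bounds `a ≤ A_θ, A_z ≤ A` and `|∇A_θ| + |∇A_z| ≤ B` on the closure of `E`. -/
def Bounds (S : Setup2D) (a A B : ℝ) : Prop :=
  ∀ p ∈ closure S.E, a ≤ S.Ath p ∧ S.Ath p ≤ A ∧ a ≤ S.Az p ∧ S.Az p ≤ A ∧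
    ‖fderiv ℝ S.Ath p‖ + ‖fderiv ℝ S.Az p‖ ≤ B

/-- `ρ` satisfies `κ_z = ρ κ_θ` with `ρ₀ ≤ ρ ≤ ρ₁` and `|∇ρ| ≤ c2`. -/
def RhoHyp (S : Setup2D) (ρ : ℝ × ℝ → ℝ) (ρ0 ρ1 c2 : ℝ) : Prop :=
  ContDiff ℝ 1 ρ ∧ (∀ p ∈ S.E, S.kz p = ρ p * S.kth p) ∧
  (∀ p ∈ closure S.E, ρ0 ≤ ρ p ∧ ρ p ≤ ρ1 ∧ ‖fderiv ℝ ρ p‖ ≤ c2)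

/-- Nonnegativity of the curvatures and the comparability condition
`(1/c)√(κ_θ κ_z) ≤ κ_θ, κ_z ≤ c √(κ_θ κ_z)` on `E`. -/
def Comparable (S : Setup2D) (c : ℝ) : Prop :=
  ∀ p ∈ S.E, 0 ≤ S.kth p ∧ 0 ≤ S.kz p ∧
    c⁻¹ * Real.sqrt (S.kth p * S.kz p) ≤ S.kth p ∧
    S.kth p ≤ c * Real.sqrt (S.kth p * S.kz p) ∧
    c⁻¹ * Real.sqrt (S.kth p * S.kz p) ≤ S.kz p ∧
    S.kz p ≤ c * Real.sqrt (S.kth p * S.kz p)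

end Setup2D

section AuxPoincare


lemma continuous_dZ {f : ℝ × ℝ → ℝ} (hf : ContDiff ℝ 1 f) : Continuous (dZ f) :=
  (hf.continuous_fderiv one_ne_zero).clm_apply continuous_const

lemma continuous_dTh {f : ℝ × ℝ → ℝ} (hf : ContDiff ℝ 1 f) : Continuous (dTh f) :=
  (hf.continuous_fderiv one_ne_zero).clm_apply continuous_const

lemma hasDerivAt_snd {f : ℝ × ℝ → ℝ} (hf : ContDiff ℝ 1 f) (θ t : ℝ) :
    HasDerivAt (fun s => f (θ, s)) (dZ f (θ, t)) t := by
  have h1 : HasFDerivAt f (fderiv ℝ f (θ, t)) (θ, t) :=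
    (hf.differentiable one_ne_zero (θ, t)).hasFDerivAt
  have h2 : HasDerivAt (fun s : ℝ => ((θ, s) : ℝ × ℝ)) (((0 : ℝ), (1 : ℝ))) t :=
    (hasDerivAt_const t θ).prodMk (hasDerivAt_id t)
  exact h1.comp_hasDerivAt t h2

lemma sq_setIntegral_le {s : Set ℝ} (hfin : volume s ≠ ⊤) {f : ℝ → ℝ}
    (hf1 : IntegrableOn f s) (hf2 : IntegrableOn (fun x => f x ^ 2) s) :
    (∫ x in s, f x) ^ 2 ≤ (volume s).toReal * ∫ x in s, f x ^ 2 := by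
  set μ := volume.restrict s with hμ
  haveI : IsFiniteMeasure μ := ⟨by
    rw [hμ, Measure.restrict_apply_univ]; exact lt_top_iff_ne_top.2 hfin⟩
  have hmem : MemLp f 2 μ := (memLp_two_iff_integrable_sq hf1.aestronglyMeasurable).2 hf2
  have h2 : (ENNReal.ofReal (2 : ℝ)) = 2 := by norm_num
  have hmem1 : MemLp (fun x => |f x|) (ENNReal.ofReal (2 : ℝ)) μ := by
    rw [h2]; simpa [Real.norm_eq_abs] using hmem.norm
  have hmem2 : MemLp (fun _ : ℝ => (1 : ℝ)) (ENNReal.ofReal (2 : ℝ)) μ := by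
    rw [h2]; exact memLp_const 1
  have hpq : Real.HolderConjugate 2 2 := Real.HolderConjugate.two_two
  have huniv : μ univ = volume s := by rw [hμ, Measure.restrict_apply_univ]
  have h := integral_mul_le_Lp_mul_Lq_of_nonneg hpq
    (ae_of_all μ fun x => abs_nonneg (f x)) (ae_of_all μ fun _ => zero_le_one) hmem1 hmem2
  simp only [mul_one, Real.rpow_two, Real.one_rpow, sq_abs, integral_const, measureReal_def,
    huniv, smul_eq_mul, one_pow] at h
  -- h : ∫ x, |f x| ∂μ ≤ (∫ x, f x ^ 2 ∂μ) ^ (1/2 : ℝ) * ((volume s).toReal) ^ (1/2 : ℝ)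
  have hP : 0 ≤ ∫ x, f x ^ 2 ∂μ := integral_nonneg fun x => sq_nonneg _
  have hQ : (0 : ℝ) ≤ (volume s).toReal := ENNReal.toReal_nonneg
  have habs : |∫ x, f x ∂μ| ≤ ∫ x, |f x| ∂μ := by
    simpa [Real.norm_eq_abs] using norm_integral_le_integral_norm (μ := μ) f
  calc (∫ x, f x ∂μ) ^ 2 = |∫ x, f x ∂μ| ^ 2 := (sq_abs _).symm
    _ ≤ (∫ x, |f x| ∂μ) ^ 2 := pow_le_pow_left₀ (abs_nonneg _) habs 2
    _ ≤ ((∫ x, f x ^ 2 ∂μ) ^ ((1:ℝ)/2) * ((volume s).toReal) ^ ((1:ℝ)/2)) ^ 2 :=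
        pow_le_pow_left₀ (integral_nonneg fun x => abs_nonneg _) h 2
    _ = (volume s).toReal * ∫ x, f x ^ 2 ∂μ := by
        rw [mul_pow, ← Real.rpow_natCast ((∫ x, f x ^ 2 ∂μ) ^ ((1:ℝ)/2)) 2,
          ← Real.rpow_natCast (((volume s).toReal) ^ ((1:ℝ)/2)) 2,
          ← Real.rpow_mul hP, ← Real.rpow_mul hQ]
        norm_num [mul_comm]

end AuxPoincare

set_option maxHeartbeats 1000000 in
theorem bound_uz_poincare (a A B c : ℝ) (ha : 0 < a) (hA : 0 < A) (hB : 0 < B) (hc : 0 < c) :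
    ∃ C : ℝ, 0 < C ∧
      ∀ (S : Setup2D) (L : ℝ),
        S.Base → S.BZero → S.Bounds a A B →
        (∀ p ∈ S.E, 0 ≤ S.kth p ∧ 0 ≤ S.kz p ∧
          S.kz p ≤ c * Real.sqrt (S.kth p * S.kz p)) →
        (∀ θ ∈ Ioo (0 : ℝ) 1, S.z2 θ - S.z1 θ ≤ L) →
        S.nsq S.uz ≤
          C * L ^ 2 * (S.nF + S.nsq (fun p => Real.sqrt (S.kth p * S.kz p) * S.ut p) +
            S.nsq S.uth) := by
  classical
  refine ⟨3 * A ^ 2 * (A ^ 2 + A ^ 2 * c ^ 2 + B ^ 2 / a ^ 2) / a ^ 2, by positivity, ?_⟩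
  intro S L hBase hBZ hBnd hcurv hL
  obtain ⟨hz12, hAth, hAz, hkth, hkz, hpos, hut, huth, huz⟩ := hBase
  set c1 : ℝ := 3 * (A ^ 2 + A ^ 2 * c ^ 2 + B ^ 2 / a ^ 2) with hc1
  have hc1pos : 0 < c1 := by rw [hc1]; positivity
  have hL0 : 0 ≤ L := by
    obtain ⟨h1, h2, h3⟩ := hz12 (1 / 2) (by norm_num)
    have := hL (1 / 2) (by norm_num)
    linarith
  -- geometry of the domain
  have hsub : S.E ⊆ Ioo (0 : ℝ) 1 ×ˢ Ioo (0 : ℝ) 1 := by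
    rintro ⟨θ, z⟩ ⟨hθ, hz⟩
    obtain ⟨h1, h2, h3⟩ := hz12 θ ⟨hθ.1.le, hθ.2.le⟩
    exact ⟨hθ, ⟨lt_of_le_of_lt h1 hz.1, lt_of_lt_of_le hz.2 h3⟩⟩
  set K := closure S.E with hK
  have hKsub : K ⊆ Icc (0 : ℝ) 1 ×ˢ Icc (0 : ℝ) 1 := by
    rw [hK]
    exact closure_minimal (hsub.trans (prod_mono Ioo_subset_Icc_self Ioo_subset_Icc_self))
      (isClosed_Icc.prod isClosed_Icc)
  have hKcomp : IsCompact K :=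
    (isCompact_Icc.prod isCompact_Icc).of_isClosed_subset isClosed_closure hKsub
  have hKm : MeasurableSet K := isClosed_closure.measurableSet
  have hfinE : volume S.E ≠ ⊤ :=
    ((measure_mono (subset_closure.trans hK.symm.subset)).trans_lt hKcomp.measure_lt_top).ne
  set T := toMeasurable volume S.E ∩ K with hT
  have hTm : MeasurableSet T := (measurableSet_toMeasurable _ _).inter hKm
  have hET : S.E ⊆ T := subset_inter (subset_toMeasurable _ _) subset_closure
  have hTK : T ⊆ K := inter_subset_right
  have hrest : volume.restrict S.E = volume.restrict T := by
    have h1 : volume.restrict (toMeasurable volume S.E) = volume.restrict S.E :=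
      Measure.restrict_toMeasurable hfinE
    have hnull : volume (toMeasurable volume S.E \ K) = 0 := by
      have hsum := measure_inter_add_diff (μ := volume) (toMeasurable volume S.E) hKm
      have hmeq : volume (toMeasurable volume S.E) = volume S.E := measure_toMeasurable _
      have hge : volume S.E ≤ volume (toMeasurable volume S.E ∩ K) := measure_mono hET
      have hfin2 : volume (toMeasurable volume S.E ∩ K) ≠ ⊤ :=
        ((measure_mono inter_subset_right).trans_lt hKcomp.measure_lt_top).ne
      have hle : volume (toMeasurable volume S.E ∩ K) + volume (toMeasurable volume S.E \ K)
          ≤ volume (toMeasurable volume S.E ∩ K) + 0 := by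
        rw [add_zero, hsum, hmeq]; exact hge
      simpa using (ENNReal.add_le_add_iff_left hfin2).1 hle
    have h2 : toMeasurable volume S.E =ᵐ[volume] T := by
      rw [ae_eq_set]
      constructor
      · simpa [hT, diff_self_inter] using hnull
      · have : T \ toMeasurable volume S.E = ∅ := by
          rw [hT, diff_eq_empty]; exact inter_subset_left
        simp [this]
    calc volume.restrict S.E = volume.restrict (toMeasurable volume S.E) := h1.symm
      _ = volume.restrict T := Measure.restrict_congr_set h2
  have hrw : ∀ f : ℝ × ℝ → ℝ, (∫ p in S.E, f p) = ∫ p in T, f p := fun f => by rw [hrest]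
  -- positivity and bounds on K
  have hposK : ∀ p ∈ K, 0 < S.Ath p ∧ 0 < S.Az p := fun p hp => hpos p (hK.symm.subset hp)
  have hBndK : ∀ p ∈ K, a ≤ S.Ath p ∧ S.Ath p ≤ A ∧ a ≤ S.Az p ∧ S.Az p ≤ A ∧
      ‖fderiv ℝ S.Ath p‖ + ‖fderiv ℝ S.Az p‖ ≤ B := fun p hp => hBnd p (hK.symm.subset hp)
  have hwne : ∀ p ∈ K, S.Az p * S.Ath p ≠ 0 := fun p hp =>
    (mul_pos (hposK p hp).2 (hposK p hp).1).ne'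
  -- continuity
  have cW : Continuous fun p => S.Ath p * S.Az p := hAth.continuous.mul hAz.continuous
  have cdZuz : Continuous (dZ S.uz) := continuous_dZ huz
  have hcontFsym : ContinuousOn S.FsymSq K := by
    have hden : ContinuousOn (fun p => S.Az p * S.Ath p) K :=
      (hAz.continuous.mul hAth.continuous).continuousOn
    have c22 : ContinuousOn S.F22 K := by
      refine ContinuousOn.div ?_ hden hwne
      exact ((hAz.continuous.mul (continuous_dTh huth)).add
        (((hAz.continuous.mul hAth.continuous).mul hkth.continuous).mul hut.continuous)).add
        ((continuous_dZ hAth).mul huz.continuous) |>.continuousOn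
    have c23 : ContinuousOn S.F23 K := by
      refine ContinuousOn.div ?_ hden hwne
      exact ((hAth.continuous.mul (continuous_dZ huth)).sub
        ((continuous_dTh hAz).mul huz.continuous)).continuousOn
    have c32 : ContinuousOn S.F32 K := by
      refine ContinuousOn.div ?_ hden hwne
      exact ((hAz.continuous.mul (continuous_dTh huz)).sub
        ((continuous_dZ hAth).mul huth.continuous)).continuousOn
    have c33 : ContinuousOn S.F33 K := by
      refine ContinuousOn.div ?_ hden hwne
      exact ((hAth.continuous.mul (continuous_dZ huz)).add
        (((hAz.continuous.mul hAth.continuous).mul hkz.continuous).mul hut.continuous)).add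
        ((continuous_dTh hAz).mul huth.continuous) |>.continuousOn
    have csym : ContinuousOn S.F23sym K := (c23.add c32).div_const 2
    exact ((c22.pow 2).add ((continuousOn_const.mul (csym.pow 2)))).add (c33.pow 2)
  have intOnT : ∀ {f : ℝ × ℝ → ℝ}, ContinuousOn f K → IntegrableOn f T volume :=
    fun hf => (hf.integrableOn_compact hKcomp).mono_set hTK
  -- the three integrands
  set sut : ℝ × ℝ → ℝ := fun p => Real.sqrt (S.kth p * S.kz p) * S.ut p with hsut
  have csut : Continuous sut :=
    ((hkth.continuous.mul hkz.continuous).sqrt).mul hut.continuous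
  set f3 : ℝ × ℝ → ℝ :=
    fun p => S.Ath p * S.Az p * (S.FsymSq p + sut p ^ 2 + S.uth p ^ 2) with hf3
  have hcontf3 : ContinuousOn f3 K :=
    (cW.continuousOn).mul ((hcontFsym.add ((csut.pow 2).continuousOn)).add
      ((huth.continuous.pow 2).continuousOn))
  -- pointwise bound for (dZ uz)^2 on T
  have hFsym0 : ∀ p, 0 ≤ S.FsymSq p := fun p => by rw [Setup2D.FsymSq]; positivity
  have key3 : ∀ p ∈ T, (dZ S.uz p) ^ 2 ≤ (c1 / a ^ 2) * f3 p := by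
    intro p hp
    have hpK : p ∈ K := hTK hp
    obtain ⟨hb1, hb2, hb3, hb4, hb5⟩ := hBndK p hpK
    obtain ⟨hp1, hp2⟩ := hposK p hpK
    have hne : S.Az p * S.Ath p ≠ 0 := hwne p hpK
    have hF33 : S.F33 p * (S.Az p * S.Ath p) =
        S.Ath p * dZ S.uz p + S.Az p * S.Ath p * S.kz p * S.ut p + dTh S.Az p * S.uth p := by
      rw [Setup2D.F33, div_mul_cancel₀ _ hne]
    have hid : dZ S.uz p = S.Az p * S.F33 p - S.Az p * S.kz p * S.ut p
        - dTh S.Az p / S.Ath p * S.uth p := by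
      have hAthne : S.Ath p ≠ 0 := hp1.ne'
      apply mul_left_cancel₀ hAthne
      have hzz : S.Ath p * (dTh S.Az p / S.Ath p * S.uth p) = dTh S.Az p * S.uth p := by
        field_simp
      calc S.Ath p * dZ S.uz p
          = S.F33 p * (S.Az p * S.Ath p) - S.Ath p * (S.Az p * S.kz p * S.ut p)
            - dTh S.Az p * S.uth p := by linear_combination -hF33
        _ = S.Ath p * (S.Az p * S.F33 p - S.Az p * S.kz p * S.ut p
            - dTh S.Az p / S.Ath p * S.uth p) := by
            rw [mul_sub, mul_sub, hzz]; ring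
    -- term bounds
    have hkzut : (S.Az p * S.kz p * S.ut p) ^ 2 ≤ A ^ 2 * c ^ 2 * (sut p) ^ 2 := by
      by_cases hpE : p ∈ S.E
      · obtain ⟨hk1, hk2, hk3⟩ := hcurv p hpE
        have hs0 : 0 ≤ Real.sqrt (S.kth p * S.kz p) := Real.sqrt_nonneg _
        have h1 : (S.kz p) ^ 2 ≤ (c * Real.sqrt (S.kth p * S.kz p)) ^ 2 :=
          pow_le_pow_left₀ hk2 hk3 2
        have hAz2 : (S.Az p) ^ 2 ≤ A ^ 2 := pow_le_pow_left₀ hp2.le hb4 2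
        calc (S.Az p * S.kz p * S.ut p) ^ 2
            = (S.Az p) ^ 2 * ((S.kz p) ^ 2 * (S.ut p) ^ 2) := by ring
          _ ≤ A ^ 2 * ((c * Real.sqrt (S.kth p * S.kz p)) ^ 2 * (S.ut p) ^ 2) := by
              apply mul_le_mul hAz2 (mul_le_mul_of_nonneg_right h1 (sq_nonneg _))
                (by positivity) (by positivity)
          _ = A ^ 2 * c ^ 2 * (sut p) ^ 2 := by rw [hsut]; ring
      · have hfr : p ∈ frontier S.E := ⟨hpK, fun hin => hpE (interior_subset hin)⟩
        have hut0 := (hBZ p hfr).1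
        simp [hut0, hsut]
    have hF33sq : (S.Az p * S.F33 p) ^ 2 ≤ A ^ 2 * S.FsymSq p := by
      have h1 : (S.F33 p) ^ 2 ≤ S.FsymSq p := by
        rw [Setup2D.FsymSq]; nlinarith [sq_nonneg (S.F22 p), sq_nonneg (S.F23sym p)]
      have hAz2 : (S.Az p) ^ 2 ≤ A ^ 2 := pow_le_pow_left₀ hp2.le hb4 2
      calc (S.Az p * S.F33 p) ^ 2 = (S.Az p) ^ 2 * (S.F33 p) ^ 2 := by ring
        _ ≤ A ^ 2 * S.FsymSq p :=
            mul_le_mul hAz2 h1 (sq_nonneg _) (sq_nonneg _)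
    have hdth : (dTh S.Az p / S.Ath p * S.uth p) ^ 2 ≤ B ^ 2 / a ^ 2 * (S.uth p) ^ 2 := by
      have h1 : |dTh S.Az p| ≤ B := by
        have hop := (fderiv ℝ S.Az p).le_opNorm ((1 : ℝ), (0 : ℝ))
        have hnorm : ‖((1 : ℝ), (0 : ℝ))‖ = 1 := by
          simp [Prod.norm_def]
        rw [hnorm, mul_one] at hop
        have : ‖fderiv ℝ S.Az p‖ ≤ B := le_trans (le_add_of_nonneg_left (norm_nonneg _)) hb5
        calc |dTh S.Az p| = ‖fderiv ℝ S.Az p ((1 : ℝ), (0 : ℝ))‖ := (Real.norm_eq_abs _).symm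
          _ ≤ ‖fderiv ℝ S.Az p‖ := hop
          _ ≤ B := this
      have h2 : (dTh S.Az p) ^ 2 ≤ B ^ 2 := by
        rw [← sq_abs]; exact pow_le_pow_left₀ (abs_nonneg _) h1 2
      have h3 : a ^ 2 ≤ (S.Ath p) ^ 2 := by nlinarith
      have h4 : (dTh S.Az p / S.Ath p * S.uth p) ^ 2
          = (dTh S.Az p) ^ 2 * (S.uth p) ^ 2 / (S.Ath p) ^ 2 := by ring
      rw [h4]
      have h5 : (dTh S.Az p) ^ 2 * (S.uth p) ^ 2 ≤ B ^ 2 * (S.uth p) ^ 2 :=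
        mul_le_mul_of_nonneg_right h2 (sq_nonneg _)
      calc (dTh S.Az p) ^ 2 * (S.uth p) ^ 2 / (S.Ath p) ^ 2
          ≤ B ^ 2 * (S.uth p) ^ 2 / a ^ 2 := by
            apply div_le_div₀ (by positivity) h5 (by positivity) h3
        _ = B ^ 2 / a ^ 2 * (S.uth p) ^ 2 := by ring
    -- combine
    have hcoef : ∀ F U V : ℝ, 0 ≤ F → 0 ≤ U → 0 ≤ V →
        3 * (A ^ 2 * F + A ^ 2 * c ^ 2 * U + B ^ 2 / a ^ 2 * V) ≤ c1 * (F + U + V) := by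
      intro F U V hF hU hV
      rw [hc1]
      nlinarith [mul_nonneg (mul_nonneg (sq_nonneg A) (sq_nonneg c)) hF,
        mul_nonneg (div_nonneg (sq_nonneg B) (sq_nonneg a)) hF,
        mul_nonneg (sq_nonneg A) hU,
        mul_nonneg (div_nonneg (sq_nonneg B) (sq_nonneg a)) hU,
        mul_nonneg (sq_nonneg A) hV,
        mul_nonneg (mul_nonneg (sq_nonneg A) (sq_nonneg c)) hV]
    have hsum : (dZ S.uz p) ^ 2 ≤ c1 * (S.FsymSq p + sut p ^ 2 + S.uth p ^ 2) := by
      rw [hid]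
      set X := S.Az p * S.F33 p
      set Y := S.Az p * S.kz p * S.ut p
      set Z := dTh S.Az p / S.Ath p * S.uth p
      calc (X - Y - Z) ^ 2 ≤ 3 * (X ^ 2 + Y ^ 2 + Z ^ 2) := by
            nlinarith [sq_nonneg (X + Y), sq_nonneg (X + Z), sq_nonneg (Y - Z)]
        _ ≤ 3 * (A ^ 2 * S.FsymSq p + A ^ 2 * c ^ 2 * (sut p) ^ 2
              + B ^ 2 / a ^ 2 * (S.uth p) ^ 2) := by linarith [hF33sq, hkzut, hdth]
        _ ≤ c1 * (S.FsymSq p + sut p ^ 2 + S.uth p ^ 2) :=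
            hcoef _ _ _ (hFsym0 p) (sq_nonneg _) (sq_nonneg _)
    have hX0 : 0 ≤ S.FsymSq p + sut p ^ 2 + S.uth p ^ 2 := by
      have := hFsym0 p; positivity
    have hwa : a ^ 2 ≤ S.Ath p * S.Az p := by nlinarith [mul_le_mul hb1 hb3 ha.le hp1.le]
    calc (dZ S.uz p) ^ 2 ≤ c1 * (S.FsymSq p + sut p ^ 2 + S.uth p ^ 2) := hsum
      _ = (c1 / a ^ 2) * (a ^ 2 * (S.FsymSq p + sut p ^ 2 + S.uth p ^ 2)) := by
          field_simp
      _ ≤ (c1 / a ^ 2) * f3 p := by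
          rw [hf3]
          apply mul_le_mul_of_nonneg_left _ (le_of_lt (by positivity))
          exact mul_le_mul_of_nonneg_right hwa hX0
  -- Fubini / Poincaré step : ∫_T uz^2 ≤ L^2 ∫_T (dZ uz)^2
  have fubini : (∫ p in T, (S.uz p) ^ 2) ≤ L ^ 2 * ∫ p in T, (dZ S.uz p) ^ 2 := by
    have hcf2 : Continuous fun p : ℝ × ℝ => (S.uz p) ^ 2 := huz.continuous.pow 2
    have hcg2 : Continuous fun p : ℝ × ℝ => (dZ S.uz p) ^ 2 := cdZuz.pow 2
    have hif2 : Integrable (T.indicator fun p => (S.uz p) ^ 2) volume :=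
      (integrable_indicator_iff hTm).2 (intOnT hcf2.continuousOn)
    have hig2 : Integrable (T.indicator fun p => (dZ S.uz p) ^ 2) volume :=
      (integrable_indicator_iff hTm).2 (intOnT hcg2.continuousOn)
    have hif2' : Integrable (T.indicator fun p => (S.uz p) ^ 2)
        ((volume : Measure ℝ).prod volume) := by
      rwa [← Measure.volume_eq_prod]
    have hig2' : Integrable (T.indicator fun p => (dZ S.uz p) ^ 2)
        ((volume : Measure ℝ).prod volume) := by
      rwa [← Measure.volume_eq_prod]
    set I : ℝ → ℝ := fun θ => ∫ z, T.indicator (fun p => (S.uz p) ^ 2) (θ, z) with hI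
    set J : ℝ → ℝ := fun θ => ∫ z, T.indicator (fun p => (dZ S.uz p) ^ 2) (θ, z) with hJdef
    have hIint : Integrable I volume := hif2'.integral_prod_left
    have hJint : Integrable J volume := hig2'.integral_prod_left
    have e1 : (∫ p in T, (S.uz p) ^ 2) = ∫ θ, I θ := by
      rw [← integral_indicator hTm, Measure.volume_eq_prod]
      exact integral_prod _ hif2'
    have e2 : (∫ p in T, (dZ S.uz p) ^ 2) = ∫ θ, J θ := by
      rw [← integral_indicator hTm, Measure.volume_eq_prod]
      exact integral_prod _ hig2'
    have key : ∀ᵐ θ : ℝ, I θ ≤ L ^ 2 * J θ := by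
      have h01 : ∀ᵐ θ : ℝ, θ ∉ ({0, 1} : Set ℝ) := by
        refine measure_eq_zero_iff_ae_notMem.mp ?_
        exact ((Set.finite_singleton (1 : ℝ)).insert 0).measure_zero volume
      filter_upwards [h01] with θ hθ01
      have hJnn : 0 ≤ J θ := integral_nonneg fun z =>
        Set.indicator_nonneg (fun q _ => sq_nonneg _) _
      by_cases hθ : θ ∈ Ioo (0 : ℝ) 1
      · obtain ⟨hz0, hz12', hz13⟩ := hz12 θ ⟨hθ.1.le, hθ.2.le⟩
        have hbL : S.z2 θ - S.z1 θ ≤ L := hL θ hθ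
        set Tθ : Set ℝ := {z | (θ, z) ∈ T} with hTθ
        have hTθm : MeasurableSet Tθ := measurable_prodMk_left hTm
        have hTθsub : Tθ ⊆ Icc (0 : ℝ) 1 := fun z hz => (hKsub (hTK hz)).2
        have cgθ : Continuous fun t => dZ S.uz (θ, t) :=
          cdZuz.comp (continuous_const.prodMk continuous_id)
        have hJθ : J θ = ∫ z in Tθ, (dZ S.uz (θ, z)) ^ 2 := by
          rw [hJdef, ← integral_indicator hTθm]
          exact integral_congr_ae (ae_of_all _ fun z => by
            simp [Set.indicator_apply, hTθ])
        have hJintset : IntegrableOn (fun z => (dZ S.uz (θ, z)) ^ 2) Tθ volume :=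
          ((cgθ.pow 2).integrableOn_Icc).mono_set hTθsub
        have hb1cl : ((θ, S.z1 θ) : ℝ × ℝ) ∈ closure S.E := by
          have hss : ({θ} ×ˢ Ioo (S.z1 θ) (S.z2 θ) : Set (ℝ × ℝ)) ⊆ S.E := by
            rintro ⟨θ', z⟩ ⟨hθ', hz⟩
            obtain rfl : θ' = θ := hθ'
            exact ⟨hθ, hz⟩
          have hcl : closure ({θ} ×ˢ Ioo (S.z1 θ) (S.z2 θ) : Set (ℝ × ℝ))
              = {θ} ×ˢ Icc (S.z1 θ) (S.z2 θ) := by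
            rw [closure_prod_eq, closure_singleton, closure_Ioo hz12'.ne]
          refine closure_mono hss ?_
          rw [hcl]
          exact ⟨rfl, ⟨le_refl _, hz12'.le⟩⟩
        have huzb1 : S.uz (θ, S.z1 θ) = 0 := by
          refine (hBZ _ ⟨hb1cl, fun hin => ?_⟩).2.2
          exact absurd (interior_subset hin : ((θ, S.z1 θ) : ℝ × ℝ) ∈ S.E)
            (fun h => lt_irrefl _ h.2.1)
        have hRHSnn : ∀ z : ℝ,
            0 ≤ (Icc (S.z1 θ) (S.z2 θ)).indicator (fun _ : ℝ => L * J θ) z :=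
          fun z => Set.indicator_nonneg (fun _ _ => mul_nonneg hL0 hJnn) _
        have hpt : ∀ z : ℝ, T.indicator (fun p => (S.uz p) ^ 2) (θ, z)
            ≤ (Icc (S.z1 θ) (S.z2 θ)).indicator (fun _ : ℝ => L * J θ) z := by
          intro z
          by_cases hzT : (θ, z) ∈ T
          · rw [Set.indicator_of_mem hzT]
            by_cases hzI : z ∈ Ioo (S.z1 θ) (S.z2 θ)
            · have hb1z : S.z1 θ ≤ z := hzI.1.le
              have hftc := intervalIntegral.integral_eq_sub_of_hasDerivAt
                (a := S.z1 θ) (b := z)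
                (f := fun t => S.uz (θ, t)) (f' := fun t => dZ S.uz (θ, t))
                (fun t _ => hasDerivAt_snd huz θ t) (cgθ.intervalIntegrable _ _)
              simp only [huzb1, sub_zero] at hftc
              have hIoc : Ioc (S.z1 θ) z ⊆ Tθ := fun t ht =>
                hET ⟨hθ, ht.1, lt_of_le_of_lt ht.2 hzI.2⟩
              have hfin : volume (Ioc (S.z1 θ) z) ≠ ⊤ := by
                rw [Real.volume_Ioc]; exact ENNReal.ofReal_ne_top
              have hcs := sq_setIntegral_le hfin cgθ.integrableOn_Ioc
                ((cgθ.pow 2).integrableOn_Ioc)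
              rw [Real.volume_Ioc, ENNReal.toReal_ofReal (by linarith)] at hcs
              have hsubJ : (∫ t in Ioc (S.z1 θ) z, (dZ S.uz (θ, t)) ^ 2)
                  ≤ ∫ t in Tθ, (dZ S.uz (θ, t)) ^ 2 :=
                setIntegral_mono_set hJintset (ae_of_all _ fun t => sq_nonneg _)
                  hIoc.eventuallyLE
              have hIocnn : 0 ≤ ∫ t in Ioc (S.z1 θ) z, (dZ S.uz (θ, t)) ^ 2 :=
                setIntegral_nonneg measurableSet_Ioc fun t _ => sq_nonneg _
              have hzL : z - S.z1 θ ≤ L := by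
                have := hzI.2; linarith
              rw [Set.indicator_of_mem (show z ∈ Icc (S.z1 θ) (S.z2 θ) from
                ⟨hb1z, hzI.2.le⟩) (fun _ : ℝ => L * J θ)]
              calc (S.uz (θ, z)) ^ 2
                  = (∫ t in Ioc (S.z1 θ) z, dZ S.uz (θ, t)) ^ 2 := by
                    rw [← intervalIntegral.integral_of_le hb1z, hftc]
                _ ≤ (z - S.z1 θ) * ∫ t in Ioc (S.z1 θ) z, (dZ S.uz (θ, t)) ^ 2 := hcs
                _ ≤ L * J θ := by
                    rw [hJθ]
                    exact mul_le_mul hzL hsubJ hIocnn hL0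
            · have hfr : ((θ, z) : ℝ × ℝ) ∈ frontier S.E :=
                ⟨hTK hzT, fun hin => (fun h => hzI h.2) (interior_subset hin)⟩
              have h0 : S.uz (θ, z) = 0 := (hBZ _ hfr).2.2
              rw [h0]
              simpa using hRHSnn z
          · rw [Set.indicator_of_notMem hzT]
            exact hRHSnn z
        have hIint1 : Integrable (fun z => T.indicator (fun p => (S.uz p) ^ 2) (θ, z))
            volume := by
          have heq : (fun z => T.indicator (fun p => (S.uz p) ^ 2) (θ, z))
              = Tθ.indicator (fun z => (S.uz (θ, z)) ^ 2) := by
            funext z; simp [Set.indicator_apply, hTθ]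
          rw [heq]
          exact (integrable_indicator_iff hTθm).2
            ((((huz.continuous.comp (continuous_const.prodMk continuous_id)).pow
              2).integrableOn_Icc).mono_set hTθsub)
        have hIint2 : Integrable
            ((Icc (S.z1 θ) (S.z2 θ)).indicator (fun _ : ℝ => L * J θ)) volume :=
          (integrable_indicator_iff measurableSet_Icc).2
            (integrableOn_const (by
              rw [Real.volume_Icc]; exact ENNReal.ofReal_ne_top))
        have hmono : I θ ≤ ∫ z, (Icc (S.z1 θ) (S.z2 θ)).indicator
            (fun _ : ℝ => L * J θ) z := integral_mono hIint1 hIint2 hpt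
        have hval : (∫ z, (Icc (S.z1 θ) (S.z2 θ)).indicator (fun _ : ℝ => L * J θ) z)
            = (S.z2 θ - S.z1 θ) * (L * J θ) := by
          rw [integral_indicator measurableSet_Icc, setIntegral_const,
            Real.volume_real_Icc_of_le (by linarith), smul_eq_mul]
        calc I θ ≤ (S.z2 θ - S.z1 θ) * (L * J θ) := hval ▸ hmono
          _ ≤ L * (L * J θ) := mul_le_mul_of_nonneg_right hbL (mul_nonneg hL0 hJnn)
          _ = L ^ 2 * J θ := by ring
      · have hIzero : I θ = 0 := by
          rw [hI]
          have hz : ∀ z : ℝ, T.indicator (fun p => (S.uz p) ^ 2) (θ, z) = 0 := by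
            intro z
            apply Set.indicator_of_notMem
            intro hmem
            have hIcc := (hKsub (hTK hmem)).1
            rcases hIcc.1.lt_or_eq with h | h
            · rcases hIcc.2.lt_or_eq with h' | h'
              · exact hθ ⟨h, h'⟩
              · exact hθ01 (by
                  simp only [Set.mem_insert_iff, Set.mem_singleton_iff]
                  exact Or.inr h')
            · exact hθ01 (by
                  simp only [Set.mem_insert_iff, Set.mem_singleton_iff]
                  exact Or.inl h.symm)
          simp [hz]
        rw [hIzero]
        exact mul_nonneg (sq_nonneg L) hJnn
    calc (∫ p in T, (S.uz p) ^ 2) = ∫ θ, I θ := e1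
      _ ≤ ∫ θ, L ^ 2 * J θ := integral_mono_ae hIint (hJint.const_mul _) key
      _ = L ^ 2 * ∫ θ, J θ := integral_const_mul _ _
      _ = L ^ 2 * ∫ p in T, (dZ S.uz p) ^ 2 := by rw [e2]
  -- assembling
  have int_f1 : IntegrableOn (fun p => S.Ath p * S.Az p * S.uz p * S.uz p) T volume :=
    intOnT (((cW.mul huz.continuous).mul huz.continuous).continuousOn)
  have int_f2 : IntegrableOn (fun p => A ^ 2 * (S.uz p) ^ 2) T volume :=
    intOnT ((continuous_const.mul (huz.continuous.pow 2)).continuousOn)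
  have int_g2 : IntegrableOn (fun p => (dZ S.uz p) ^ 2) T volume :=
    intOnT ((cdZuz.pow 2).continuousOn)
  have int_f3 : IntegrableOn (fun p => (c1 / a ^ 2) * f3 p) T volume :=
    intOnT (continuousOn_const.mul hcontf3)
  have step1 : S.nsq S.uz = ∫ p in T, S.Ath p * S.Az p * S.uz p * S.uz p := by
    rw [Setup2D.nsq, Setup2D.ip, hrest]
  have step2 : (∫ p in T, S.Ath p * S.Az p * S.uz p * S.uz p)
      ≤ ∫ p in T, A ^ 2 * (S.uz p) ^ 2 := by
    refine setIntegral_mono_on int_f1 int_f2 hTm fun p hp => ?_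
    obtain ⟨hb1, hb2, hb3, hb4, hb5⟩ := hBndK p (hTK hp)
    obtain ⟨hp1, hp2⟩ := hposK p (hTK hp)
    calc S.Ath p * S.Az p * S.uz p * S.uz p = S.Ath p * S.Az p * S.uz p ^ 2 := by ring
      _ ≤ A * A * S.uz p ^ 2 :=
          mul_le_mul_of_nonneg_right (mul_le_mul hb2 hb4 hp2.le hA.le) (sq_nonneg _)
      _ = A ^ 2 * S.uz p ^ 2 := by ring
  have step5 : (∫ p in T, (dZ S.uz p) ^ 2) ≤ ∫ p in T, (c1 / a ^ 2) * f3 p :=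
    setIntegral_mono_on int_g2 int_f3 hTm key3
  have step6 : (∫ p in T, f3 p) = S.nF + S.nsq sut + S.nsq S.uth := by
    have i1 : IntegrableOn (fun p => S.Ath p * S.Az p * S.FsymSq p) T volume :=
      intOnT (cW.continuousOn.mul hcontFsym)
    have i2 : IntegrableOn (fun p => S.Ath p * S.Az p * sut p ^ 2) T volume :=
      intOnT ((cW.mul (csut.pow 2)).continuousOn)
    have i3 : IntegrableOn (fun p => S.Ath p * S.Az p * S.uth p ^ 2) T volume :=
      intOnT ((cW.mul (huth.continuous.pow 2)).continuousOn)
    have hsplit : (∫ p in T, f3 p) = (∫ p in T, S.Ath p * S.Az p * S.FsymSq p)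
        + (∫ p in T, S.Ath p * S.Az p * sut p ^ 2)
        + (∫ p in T, S.Ath p * S.Az p * S.uth p ^ 2) := by
      have e1 : (∫ p in T, f3 p) = ∫ p in T, (S.Ath p * S.Az p * S.FsymSq p
          + S.Ath p * S.Az p * sut p ^ 2 + S.Ath p * S.Az p * S.uth p ^ 2) :=
        integral_congr_ae (ae_of_all _ fun p => by rw [hf3]; ring)
      have i12 : IntegrableOn (fun p => S.Ath p * S.Az p * S.FsymSq p
          + S.Ath p * S.Az p * sut p ^ 2) T volume := i1.add i2
      rw [e1, integral_add i12 i3, integral_add i1 i2]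
    rw [hsplit, Setup2D.nF, Setup2D.nsq, Setup2D.ip, Setup2D.nsq, Setup2D.ip, hrw, hrw, hrw]
    have e2 : (∫ p in T, S.Ath p * S.Az p * sut p ^ 2)
        = ∫ p in T, S.Ath p * S.Az p * sut p * sut p :=
      integral_congr_ae (ae_of_all _ fun p => by ring)
    have e3 : (∫ p in T, S.Ath p * S.Az p * S.uth p ^ 2)
        = ∫ p in T, S.Ath p * S.Az p * S.uth p * S.uth p :=
      integral_congr_ae (ae_of_all _ fun p => by ring)
    rw [e2, e3]
  calc S.nsq S.uz = ∫ p in T, S.Ath p * S.Az p * S.uz p * S.uz p := step1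
    _ ≤ ∫ p in T, A ^ 2 * (S.uz p) ^ 2 := step2
    _ = A ^ 2 * ∫ p in T, (S.uz p) ^ 2 := integral_const_mul _ _
    _ ≤ A ^ 2 * (L ^ 2 * ∫ p in T, (dZ S.uz p) ^ 2) :=
        mul_le_mul_of_nonneg_left fubini (by positivity)
    _ ≤ A ^ 2 * (L ^ 2 * ∫ p in T, (c1 / a ^ 2) * f3 p) := by
        apply mul_le_mul_of_nonneg_left _ (by positivity)
        exact mul_le_mul_of_nonneg_left step5 (by positivity)
    _ = A ^ 2 * (L ^ 2 * ((c1 / a ^ 2) * ∫ p in T, f3 p)) := by rw [integral_const_mul]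
    _ = 3 * A ^ 2 * (A ^ 2 + A ^ 2 * c ^ 2 + B ^ 2 / a ^ 2) / a ^ 2 * L ^ 2
        * (S.nF + S.nsq sut + S.nsq S.uth) := by
        rw [← step6, hc1]; ring
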